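/- Under Schrödinger evolution P(t) = e^{−iHt} P₀ e^{iHt}, if T_θ ≥ 0 is a time at which arcsin(‖P₀ − P(T_θ)‖) = θ for some θ ∈ (0, π/2], then T_θ ≥ θ / ‖P₀ H P₀^⊥‖ (in particular ‖P₀ H P₀^⊥‖ > 0). -/

import Mathlib

open Real ContinuousLinearMap

/-- `P` is an orthogonal projection: self-adjoint and idempotent. -/
def IsOrthogonalProjection {E : Type*} [NormedAddCommGroup E] [InnerProductSpace ℂ E]
    [CompleteSpace E] (P : E →L[ℂ] E) : Prop :=
  IsSelfAdjoint P ∧ P ∘L P = P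

set_option maxHeartbeats 1000000
set_option synthInstance.maxHeartbeats 400000

namespace TimeLBAux

open NormedSpace

variable {E : Type*} [NormedAddCommGroup E] [InnerProductSpace ℂ E] [CompleteSpace E]

local notation "⟪" x ", " y "⟫" => @inner ℂ _ _ x y

lemma sa_inner {Q : E →L[ℂ] E} (hQ : IsSelfAdjoint Q) (x y : E) :
    ⟪Q x, y⟫ = ⟪x, Q y⟫ := by
  conv_lhs => rw [← hQ.adjoint_eq]
  exact ContinuousLinearMap.adjoint_inner_left Q y x

lemma hasDerivAt_expv (K : E →L[ℂ] E) (t : ℝ) (x : E) :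
    HasDerivAt (fun s : ℝ => NormedSpace.exp (s • K) x) (K (NormedSpace.exp (t • K) x)) t := by
  have h1 : HasDerivAt (fun s : ℝ => NormedSpace.exp (s • K)) (K * NormedSpace.exp (t • K)) t := by
    exact hasDerivAt_exp_smul_const' K t
  have h2 := ((ContinuousLinearMap.apply ℂ E x).restrictScalars ℝ).hasFDerivAt.comp_hasDerivAt t h1
  simpa [Function.comp_def] using h2

lemma norm_exp_apply {K : E →L[ℂ] E} (hK : star K = -K) (t : ℝ) (x : E) :
    ‖NormedSpace.exp (t • K) x‖ = ‖x‖ := by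
  set ψ : ℝ → E := fun s => NormedSpace.exp (s • K) x with hψ
  have hadj : ContinuousLinearMap.adjoint K = -K := by
    rw [← ContinuousLinearMap.star_eq_adjoint, hK]
  have key : ∀ s : ℝ, HasDerivAt (fun u => RCLike.re (K := ℂ) ⟪ψ u, ψ u⟫) 0 s := by
    intro s
    have hd := hasDerivAt_expv K s x
    have h2 := (RCLike.reCLM (K := ℂ)).hasFDerivAt.comp_hasDerivAt s ((hd.inner ℂ hd))
    refine h2.congr_deriv ?_; symm
    have h3 : ⟪K (ψ s), ψ s⟫ = -⟪ψ s, K (ψ s)⟫ := by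
      have h4 := ContinuousLinearMap.adjoint_inner_left K (ψ s) (ψ s)
      rw [hadj] at h4
      simp only [ContinuousLinearMap.neg_apply, inner_neg_left] at h4
      linear_combination -h4
    rw [h3]
    simp [hψ]
  have hdiff : Differentiable ℝ (fun u => RCLike.re (K := ℂ) ⟪ψ u, ψ u⟫) :=
    fun s => (key s).differentiableAt
  have hconst : RCLike.re (K := ℂ) ⟪ψ t, ψ t⟫ = RCLike.re (K := ℂ) ⟪ψ 0, ψ 0⟫ :=
    is_const_of_deriv_eq_zero hdiff (fun s => (key s).deriv) t 0
  have h0 : ψ 0 = x := by simp [hψ, NormedSpace.exp_zero]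
  have ht : ‖ψ t‖ ^ 2 = ‖x‖ ^ 2 := by
    rw [← inner_self_eq_norm_sq (𝕜 := ℂ), ← inner_self_eq_norm_sq (𝕜 := ℂ), hconst, h0]
  calc ‖ψ t‖ = Real.sqrt (‖ψ t‖ ^ 2) := (Real.sqrt_sq (norm_nonneg _)).symm
    _ = Real.sqrt (‖x‖ ^ 2) := by rw [ht]
    _ = ‖x‖ := Real.sqrt_sq (norm_nonneg _)

lemma pyth {Q : E →L[ℂ] E} (hQ : IsSelfAdjoint Q) (hQ2 : Q * Q = Q) (x : E) :
    ‖Q x‖ ^ 2 + ‖x - Q x‖ ^ 2 = ‖x‖ ^ 2 := by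
  have horth : ⟪Q x, x - Q x⟫ = 0 := by
    rw [sa_inner hQ]
    have : Q (x - Q x) = 0 := by
      have := congrArg (fun T : E →L[ℂ] E => T x) hQ2
      simp only [ContinuousLinearMap.mul_apply] at this
      simp [map_sub, this]
    simp [this]
  have hsum : Q x + (x - Q x) = x := by abel
  have := @norm_add_sq ℂ _ _ _ _ (Q x) (x - Q x)
  rw [hsum, horth] at this
  simp at this
  linarith


lemma core {Hop Q : E →L[ℂ] E} (hH : IsSelfAdjoint Hop) (hQ : IsSelfAdjoint Q)
    (hQ2 : Q * Q = Q) (φ : E) (hφ : ‖φ‖ = 1) (hQφ : Q φ = 0) {T κ δ : ℝ} (hT : 0 ≤ T)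
    (hκ : ‖Q * Hop * (1 - Q)‖ < κ) (hδ : 0 < δ) (hπ : κ * T + δ ≤ π / 2) :
    ‖Q (NormedSpace.exp (T • ((-Complex.I) • Hop)) φ)‖ ≤ Real.sin (κ * T + δ) := by
  set A : E →L[ℂ] E := (-Complex.I) • Hop with hA
  have hAstar : star A = -A := by
    rw [hA, star_smul, hH.star_eq]
    simp
  set ψ : ℝ → E := fun s => NormedSpace.exp (s • A) φ with hψ
  have hψd : ∀ s, HasDerivAt ψ (A (ψ s)) s := fun s => hasDerivAt_expv A s φ
  have hψn : ∀ s, ‖ψ s‖ = 1 := fun s => by rw [hψ]; simp [norm_exp_apply hAstar s φ, hφ]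
  set u : ℝ → ℝ := fun s => RCLike.re (K := ℂ) ⟪Q (ψ s), Q (ψ s)⟫ with hu
  set u' : ℝ → ℝ := fun s => 2 * RCLike.re (K := ℂ) ⟪Q (ψ s), Q (A (ψ s))⟫ with hu'
  have hQψd : ∀ s, HasDerivAt (fun s => Q (ψ s)) (Q (A (ψ s))) s := fun s => by
    have := (Q.restrictScalars ℝ).hasFDerivAt.comp_hasDerivAt s (hψd s)
    simpa [Function.comp_def] using this
  have hud : ∀ s, HasDerivAt u (u' s) s := by
    intro s
    have h2 := (RCLike.reCLM (K := ℂ)).hasFDerivAt.comp_hasDerivAt s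
      (((hQψd s).inner ℂ (hQψd s)))
    refine h2.congr_deriv ?_; symm
    show (2 : ℝ) * RCLike.re (K := ℂ) ⟪Q (ψ s), Q (A (ψ s))⟫ = _
    rw [show ⟪Q (A (ψ s)), Q (ψ s)⟫ = starRingEnd ℂ ⟪Q (ψ s), Q (A (ψ s))⟫ from
      (inner_conj_symm _ _).symm]
    have hz : ∀ z : ℂ, RCLike.reCLM (K := ℂ) (z + starRingEnd ℂ z) = 2 * RCLike.re (K := ℂ) z := by
      intro z
      simp only [RCLike.reCLM_apply, RCLike.re_to_complex, Complex.add_re, Complex.conj_re]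
      ring
    rw [hz]
  have huval : ∀ s, u s = ‖Q (ψ s)‖ ^ 2 := fun s => inner_self_eq_norm_sq (𝕜 := ℂ) _
  set V : ℝ := ‖Q * Hop * (1 - Q)‖ with hV
  have hV0 : 0 ≤ V := norm_nonneg _
  have hκ0 : 0 < κ := lt_of_le_of_lt hV0 hκ
  -- derivative bound
  have hbound : ∀ s, u' s ≤ 2 * V * (‖Q (ψ s)‖ * ‖ψ s - Q (ψ s)‖) := by
    intro s
    have hQy : Q (Q (ψ s)) = Q (ψ s) := by
      rw [← ContinuousLinearMap.mul_apply, hQ2]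
    have him : (⟪Q (ψ s), Hop (Q (ψ s))⟫ : ℂ).im = 0 := by
      have hc : starRingEnd ℂ ⟪Q (ψ s), Hop (Q (ψ s))⟫ = ⟪Q (ψ s), Hop (Q (ψ s))⟫ := by
        rw [inner_conj_symm, sa_inner hH]
      exact Complex.conj_eq_iff_im.mp hc
    have hsplit : ⟪Q (ψ s), Q (Hop (ψ s))⟫ =
        ⟪Q (ψ s), Hop (Q (ψ s))⟫ + ⟪Q (ψ s), Q (Hop (ψ s - Q (ψ s)))⟫ := by
      have hdec : Hop (ψ s) = Hop (Q (ψ s)) + Hop (ψ s - Q (ψ s)) := by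
        rw [← map_add]; congr 1; abel
      rw [hdec, map_add, inner_add_right]
      congr 1
      rw [← sa_inner hQ, hQy]
    have hA' : Q (A (ψ s)) = (-Complex.I) • Q (Hop (ψ s)) := by
      rw [hA]; simp
    have hval : u' s = 2 * (⟪Q (ψ s), Q (Hop (ψ s - Q (ψ s)))⟫ : ℂ).im := by
      show (2 : ℝ) * RCLike.re (K := ℂ) ⟪Q (ψ s), Q (A (ψ s))⟫ = _
      rw [hA', inner_smul_right, hsplit]
      simp only [RCLike.re_to_complex]
      rw [mul_add, Complex.add_re]
      have h1 : (-Complex.I * ⟪Q (ψ s), Hop (Q (ψ s))⟫).re = 0 := by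
        simp [Complex.mul_re, him]
      have h2 : (-Complex.I * ⟪Q (ψ s), Q (Hop (ψ s - Q (ψ s)))⟫).re =
          (⟪Q (ψ s), Q (Hop (ψ s - Q (ψ s)))⟫ : ℂ).im := by
        simp [Complex.mul_re]
      rw [h1, h2]; ring
    have hww : (1 - Q) (ψ s - Q (ψ s)) = ψ s - Q (ψ s) := by
      simp only [ContinuousLinearMap.sub_apply, ContinuousLinearMap.one_apply, map_sub, hQy]
      abel
    have hMw : Q (Hop (ψ s - Q (ψ s))) = (Q * Hop * (1 - Q)) (ψ s - Q (ψ s)) := by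
      simp only [ContinuousLinearMap.mul_apply, hww]
    have hz : ‖(⟪Q (ψ s), Q (Hop (ψ s - Q (ψ s)))⟫ : ℂ)‖ ≤
        ‖Q (ψ s)‖ * (V * ‖ψ s - Q (ψ s)‖) := by
      calc ‖(⟪Q (ψ s), Q (Hop (ψ s - Q (ψ s)))⟫ : ℂ)‖
          ≤ ‖Q (ψ s)‖ * ‖Q (Hop (ψ s - Q (ψ s)))‖ := norm_inner_le_norm _ _
        _ ≤ ‖Q (ψ s)‖ * (V * ‖ψ s - Q (ψ s)‖) := by
            apply mul_le_mul_of_nonneg_left _ (norm_nonneg _)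
            rw [hMw, hV]
            exact le_opNorm _ _
    have him2 : (⟪Q (ψ s), Q (Hop (ψ s - Q (ψ s)))⟫ : ℂ).im ≤
        ‖(⟪Q (ψ s), Q (Hop (ψ s - Q (ψ s)))⟫ : ℂ)‖ := by
      calc (⟪Q (ψ s), Q (Hop (ψ s - Q (ψ s)))⟫ : ℂ).im
          ≤ |(⟪Q (ψ s), Q (Hop (ψ s - Q (ψ s)))⟫ : ℂ).im| := le_abs_self _
        _ ≤ ‖(⟪Q (ψ s), Q (Hop (ψ s - Q (ψ s)))⟫ : ℂ)‖ := Complex.abs_im_le_norm _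
        _ = ‖(⟪Q (ψ s), Q (Hop (ψ s - Q (ψ s)))⟫ : ℂ)‖ := rfl
    rw [hval]
    have heq : 2 * (‖Q (ψ s)‖ * (V * ‖ψ s - Q (ψ s)‖)) = 2 * V * (‖Q (ψ s)‖ * ‖ψ s - Q (ψ s)‖) := by
      ring
    linarith
  -- the fencing argument
  set B : ℝ → ℝ := fun s => Real.sin (κ * s + δ) ^ 2 with hB
  set B' : ℝ → ℝ := fun s => 2 * Real.sin (κ * s + δ) ^ 1 * (Real.cos (κ * s + δ) * κ) with hB'
  have hBd : ∀ s, HasDerivAt B (B' s) s := by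
    intro s
    have hlin : HasDerivAt (fun s : ℝ => κ * s + δ) κ s := by
      simpa using ((hasDerivAt_id s).const_mul κ).add_const δ
    exact ((Real.hasDerivAt_sin _).comp s hlin).pow 2
  have hucont : ContinuousOn u (Set.Icc 0 T) :=
    (Differentiable.continuous (fun s => (hud s).differentiableAt)).continuousOn
  have hua : u 0 ≤ B 0 := by
    have hψ0 : ψ 0 = φ := by rw [hψ]; simp [NormedSpace.exp_zero]
    have h0 : u 0 = 0 := by rw [huval 0, hψ0, hQφ]; simp
    rw [h0, hB]
    positivity
  have hbd : ∀ x ∈ Set.Ico 0 T, u x = B x → u' x < B' x := by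
    intro x hx hux
    have hx0 : (0:ℝ) ≤ x := hx.1
    have hα0 : 0 < κ * x + δ := by positivity
    have hαlt : κ * x + δ < π / 2 := by
      have hxT : x < T := hx.2
      nlinarith
    have hsin : 0 < Real.sin (κ * x + δ) :=
      Real.sin_pos_of_pos_of_lt_pi hα0 (by linarith [Real.pi_gt_three])
    have hcos : 0 < Real.cos (κ * x + δ) :=
      Real.cos_pos_of_mem_Ioo ⟨by linarith, hαlt⟩
    have hnQ : ‖Q (ψ x)‖ = Real.sin (κ * x + δ) := by
      have h1 : ‖Q (ψ x)‖ ^ 2 = Real.sin (κ * x + δ) ^ 2 := by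
        rw [← huval x, hux, hB]
      calc ‖Q (ψ x)‖ = Real.sqrt (‖Q (ψ x)‖ ^ 2) := (Real.sqrt_sq (norm_nonneg _)).symm
        _ = Real.sqrt (Real.sin (κ * x + δ) ^ 2) := by rw [h1]
        _ = Real.sin (κ * x + δ) := Real.sqrt_sq hsin.le
    have hnW : ‖ψ x - Q (ψ x)‖ = Real.cos (κ * x + δ) := by
      have h1 : ‖Q (ψ x)‖ ^ 2 + ‖ψ x - Q (ψ x)‖ ^ 2 = 1 := by
        rw [pyth hQ hQ2 (ψ x), hψn x]; norm_num
      have h2 : ‖ψ x - Q (ψ x)‖ ^ 2 = Real.cos (κ * x + δ) ^ 2 := by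
        rw [hnQ] at h1
        have := Real.sin_sq_add_cos_sq (κ * x + δ)
        linarith
      calc ‖ψ x - Q (ψ x)‖ = Real.sqrt (‖ψ x - Q (ψ x)‖ ^ 2) :=
            (Real.sqrt_sq (norm_nonneg _)).symm
        _ = Real.sqrt (Real.cos (κ * x + δ) ^ 2) := by rw [h2]
        _ = Real.cos (κ * x + δ) := Real.sqrt_sq hcos.le
    have hb := hbound x
    rw [hnQ, hnW] at hb
    have hBx : B' x = 2 * κ * (Real.sin (κ * x + δ) * Real.cos (κ * x + δ)) := by
      rw [hB']; ring
    rw [hBx]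
    calc u' x ≤ 2 * V * (Real.sin (κ * x + δ) * Real.cos (κ * x + δ)) := hb
      _ < 2 * κ * (Real.sin (κ * x + δ) * Real.cos (κ * x + δ)) := by
          apply mul_lt_mul_of_pos_right _ (by positivity)
          linarith
  have hfence : u T ≤ B T :=
    image_le_of_deriv_right_lt_deriv_boundary hucont
      (fun x hx => (hud x).hasDerivWithinAt) hua hBd hbd (Set.right_mem_Icc.mpr hT)
  -- conclude
  have hsinT : 0 ≤ Real.sin (κ * T + δ) := by
    apply Real.sin_nonneg_of_nonneg_of_le_pi
    · positivity
    · linarith [Real.pi_gt_three]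
  have hfinal : ‖Q (ψ T)‖ ^ 2 ≤ Real.sin (κ * T + δ) ^ 2 := by
    rw [← huval T]
    exact hfence
  calc ‖Q (ψ T)‖ = Real.sqrt (‖Q (ψ T)‖ ^ 2) := (Real.sqrt_sq (norm_nonneg _)).symm
    _ ≤ Real.sqrt (Real.sin (κ * T + δ) ^ 2) := Real.sqrt_le_sqrt hfinal
    _ = Real.sin (κ * T + δ) := Real.sqrt_sq hsinT


lemma core_op {Hop Q : E →L[ℂ] E} (hH : IsSelfAdjoint Hop) (hQ : IsSelfAdjoint Q)
    (hQ2 : Q * Q = Q) {T κ δ : ℝ} (hT : 0 ≤ T)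
    (hκ : ‖Q * Hop * (1 - Q)‖ < κ) (hδ : 0 < δ) (hπ : κ * T + δ ≤ π / 2)
    (x : E) (hx : Q x = 0) :
    ‖Q (NormedSpace.exp (T • ((-Complex.I) • Hop)) x)‖ ≤ Real.sin (κ * T + δ) * ‖x‖ := by
  have hsinT : 0 ≤ Real.sin (κ * T + δ) := by
    apply Real.sin_nonneg_of_nonneg_of_le_pi
    · have hκ0 : 0 < κ := lt_of_le_of_lt (norm_nonneg _) hκ
      positivity
    · linarith [Real.pi_gt_three]
  rcases eq_or_ne x 0 with h0 | h0
  · simp [h0, hsinT]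
  · set φ : E := ((‖x‖ : ℂ))⁻¹ • x with hφdef
    have hnx : (0:ℝ) < ‖x‖ := norm_pos_iff.mpr h0
    have hφn : ‖φ‖ = 1 := by
      rw [hφdef, norm_smul]
      simp [hnx.ne']
    have hQφ : Q φ = 0 := by
      rw [hφdef, map_smul, hx, smul_zero]
    have hcore := core hH hQ hQ2 φ hφn hQφ hT hκ hδ hπ
    have hlin : Q (NormedSpace.exp (T • ((-Complex.I) • Hop)) x) =
        (‖x‖ : ℂ) • Q (NormedSpace.exp (T • ((-Complex.I) • Hop)) φ) := by
      rw [hφdef, map_smul, map_smul, smul_smul]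
      rw [mul_inv_cancel₀ (by exact_mod_cast hnx.ne')]
      simp
    rw [hlin, norm_smul]
    simp only [Complex.norm_real, norm_norm]
    calc ‖x‖ * ‖Q (NormedSpace.exp (T • ((-Complex.I) • Hop)) φ)‖ ≤ ‖x‖ * Real.sin (κ * T + δ) :=
          mul_le_mul_of_nonneg_left hcore hnx.le
      _ = Real.sin (κ * T + δ) * ‖x‖ := mul_comm _ _

lemma main_bound {Hop P₀ : E →L[ℂ] E} (hH : IsSelfAdjoint Hop) (hsa : IsSelfAdjoint P₀)
    (hid : P₀ * P₀ = P₀) {T κ δ : ℝ} (hT : 0 ≤ T)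
    (hκ : ‖P₀ * Hop * (1 - P₀)‖ < κ) (hδ : 0 < δ) (hπ : κ * T + δ ≤ π / 2) :
    ‖P₀ - NormedSpace.exp (T • ((-Complex.I) • Hop)) * P₀ * NormedSpace.exp (T • (Complex.I • Hop))‖ ≤
      Real.sin (κ * T + δ) := by
  set U : E →L[ℂ] E := NormedSpace.exp (T • ((-Complex.I) • Hop)) with hU
  set W : E →L[ℂ] E := NormedSpace.exp (T • (Complex.I • Hop)) with hW
  have hUW : U * W = 1 := by
    rw [hU, hW, ← NormedSpace.exp_add_of_commute_of_mem_ball (𝕂 := ℂ) (x := T • ((-Complex.I) • Hop)) (y := T • (Complex.I • Hop)) _ ((NormedSpace.expSeries_radius_eq_top ℂ (E →L[ℂ] E)).symm ▸ edist_lt_top _ _) ((NormedSpace.expSeries_radius_eq_top ℂ (E →L[ℂ] E)).symm ▸ edist_lt_top _ _)]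
    · rw [← smul_add]
      simp [NormedSpace.exp_zero]
    · exact (((Commute.refl Hop).smul_left _).smul_right _).smul_left _ |>.smul_right _
  have hsinT : 0 ≤ Real.sin (κ * T + δ) := by
    apply Real.sin_nonneg_of_nonneg_of_le_pi
    · have hκ0 : 0 < κ := lt_of_le_of_lt (norm_nonneg _) hκ
      positivity
    · linarith [Real.pi_gt_three]
  have hWn : ∀ x, ‖W x‖ = ‖x‖ := by
    intro x
    rw [hW]
    apply norm_exp_apply
    rw [star_smul, hH.star_eq]
    simp
  -- self-adjointness facts for 1 - P₀
  have hsa' : IsSelfAdjoint (1 - P₀ : E →L[ℂ] E) := (IsSelfAdjoint.one _).sub hsa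
  have hid' : (1 - P₀) * (1 - P₀) = 1 - P₀ := by
    simp [sub_mul, mul_sub, hid]
  have hnorm_eq : ‖(1 - P₀) * Hop * (1 - (1 - P₀))‖ = ‖P₀ * Hop * (1 - P₀)‖ := by
    rw [sub_sub_cancel]
    have : (1 - P₀) * Hop * P₀ = star (P₀ * Hop * (1 - P₀)) := by
      simp only [star_mul, hsa.star_eq, hsa'.star_eq, hH.star_eq]
      rw [mul_assoc]
    rw [this, norm_star]
  apply opNorm_le_bound _ hsinT
  intro x
  set z : E := W x with hz
  have hxz : x = U z := by
    rw [hz, ← ContinuousLinearMap.mul_apply, hUW]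
    simp
  have hPtx : (U * P₀ * W) x = U (P₀ z) := by
    simp [ContinuousLinearMap.mul_apply, hz]
  have hQtx : (P₀ - U * P₀ * W) x = P₀ ((1 - (U * P₀ * W)) x) - (1 - P₀) ((U * P₀ * W) x) := by
    simp only [ContinuousLinearMap.sub_apply, ContinuousLinearMap.one_apply, map_sub]
    have hPP : P₀ ((U * P₀ * W) x) = (P₀ * (U * P₀ * W)) x := rfl
    abel
  have h1mPt : (1 - (U * P₀ * W)) x = U ((1 - P₀) z) := by
    simp only [ContinuousLinearMap.sub_apply, ContinuousLinearMap.one_apply, hPtx, map_sub]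
    rw [hxz]
  -- bound the two blocks
  have hb1 : ‖P₀ ((1 - (U * P₀ * W)) x)‖ ≤ Real.sin (κ * T + δ) * ‖(1 - P₀) z‖ := by
    rw [h1mPt, hU]
    exact core_op hH hsa hid hT hκ hδ hπ ((1 - P₀) z) (by
      rw [← ContinuousLinearMap.mul_apply]
      have : P₀ * (1 - P₀) = 0 := by simp [mul_sub, hid]
      rw [this]; rfl)
  have hb2 : ‖(1 - P₀) ((U * P₀ * W) x)‖ ≤ Real.sin (κ * T + δ) * ‖P₀ z‖ := by
    rw [hPtx, hU]
    refine core_op hH hsa' hid' hT (by rw [hnorm_eq]; exact hκ) hδ hπ (P₀ z) ?_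
    rw [← ContinuousLinearMap.mul_apply]
    have : (1 - P₀) * P₀ = 0 := by simp [sub_mul, hid]
    rw [this]; rfl
  -- orthogonality
  have horth : (⟪P₀ ((1 - (U * P₀ * W)) x), (1 - P₀) ((U * P₀ * W) x)⟫ : ℂ) = 0 := by
    rw [sa_inner hsa]
    have : P₀ ((1 - P₀) ((U * P₀ * W) x)) = 0 := by
      rw [← ContinuousLinearMap.mul_apply]
      have h : P₀ * (1 - P₀) = 0 := by simp [mul_sub, hid]
      rw [h]; rfl
    rw [this, inner_zero_right]
  have hsq : ‖(P₀ - U * P₀ * W) x‖ ^ 2 =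
      ‖P₀ ((1 - (U * P₀ * W)) x)‖ ^ 2 + ‖(1 - P₀) ((U * P₀ * W) x)‖ ^ 2 := by
    rw [hQtx]
    have := @norm_sub_sq ℂ _ _ _ _ (P₀ ((1 - (U * P₀ * W)) x)) ((1 - P₀) ((U * P₀ * W) x))
    rw [horth] at this
    simpa using this
  have hpyth : ‖P₀ z‖ ^ 2 + ‖(1 - P₀) z‖ ^ 2 = ‖x‖ ^ 2 := by
    have := pyth hsa hid z
    have h1 : (1 - P₀) z = z - P₀ z := by
      simp [ContinuousLinearMap.sub_apply]
    rw [h1, this, hz, hWn x]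
  have hfin : ‖(P₀ - U * P₀ * W) x‖ ^ 2 ≤ (Real.sin (κ * T + δ) * ‖x‖) ^ 2 := by
    rw [hsq]
    have e1 : ‖P₀ ((1 - (U * P₀ * W)) x)‖ ^ 2 ≤ (Real.sin (κ * T + δ) * ‖(1 - P₀) z‖) ^ 2 := by
      apply pow_le_pow_left₀ (norm_nonneg _) hb1
    have e2 : ‖(1 - P₀) ((U * P₀ * W) x)‖ ^ 2 ≤ (Real.sin (κ * T + δ) * ‖P₀ z‖) ^ 2 := by
      apply pow_le_pow_left₀ (norm_nonneg _) hb2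
    simp only [mul_pow] at e1 e2 ⊢
    nlinarith [e1, e2, hpyth, sq_nonneg (Real.sin (κ * T + δ))]
  calc ‖(P₀ - U * P₀ * W) x‖ = Real.sqrt (‖(P₀ - U * P₀ * W) x‖ ^ 2) :=
        (Real.sqrt_sq (norm_nonneg _)).symm
    _ ≤ Real.sqrt ((Real.sin (κ * T + δ) * ‖x‖) ^ 2) := Real.sqrt_le_sqrt hfin
    _ = Real.sin (κ * T + δ) * ‖x‖ := Real.sqrt_sq (by positivity)

end TimeLBAux

/-- If the maximal angle reaches θ ∈ (0,π/2] at time T_θ ≥ 0, then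
‖P₀ H P₀^⊥‖ > 0 and T_θ ≥ θ / ‖P₀ H P₀^⊥‖. -/
theorem time_lower_bound_VHP {E : Type*} [NormedAddCommGroup E]
    [InnerProductSpace ℂ E] [CompleteSpace E]
    (H P₀ : E →L[ℂ] E) (hH : IsSelfAdjoint H) (hP₀ : IsOrthogonalProjection P₀)
    (P : ℝ → (E →L[ℂ] E))
    (hP : ∀ t : ℝ, P t =
      NormedSpace.exp ((-(Complex.I * t)) • H) ∘L P₀ ∘L NormedSpace.exp ((Complex.I * t) • H))
    (θ Tθ : ℝ) (hθ : θ ∈ Set.Ioc 0 (Real.pi / 2)) (hT : 0 ≤ Tθ)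
    (hangle : Real.arcsin ‖P₀ - P Tθ‖ = θ) :
    0 < ‖P₀ ∘L H ∘L (1 - P₀)‖ ∧ Tθ ≥ θ / ‖P₀ ∘L H ∘L (1 - P₀)‖ := by
  obtain ⟨hθ0, hθπ⟩ := hθ
  have hVeq : (P₀ * H * (1 - P₀) : E →L[ℂ] E) = P₀ ∘L H ∘L (1 - P₀) := by
    rw [mul_assoc]; rfl
  set V : ℝ := ‖P₀ ∘L H ∘L (1 - P₀)‖ with hV
  have hVnn : 0 ≤ V := norm_nonneg _
  -- rewrite P Tθ in the canonical form
  have e1 : ((-(Complex.I * (Tθ:ℂ))) • H : E →L[ℂ] E) = Tθ • ((-Complex.I) • H) := by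
    rw [← smul_assoc]
    congr 1
    rw [Complex.real_smul]  -- hope: Tθ • (-I) = ↑Tθ * (-I)
    ring
  have e2 : (((Complex.I * (Tθ:ℂ))) • H : E →L[ℂ] E) = Tθ • (Complex.I • H) := by
    rw [← smul_assoc]
    congr 1
    rw [Complex.real_smul]
    ring
  have hPT : P Tθ = NormedSpace.exp (Tθ • ((-Complex.I) • H)) * P₀ *
      NormedSpace.exp (Tθ • (Complex.I • H)) := by
    rw [hP Tθ, ← e1, ← e2]
    rfl
  -- sin θ is a lower bound for the norm
  have hnn : 0 ≤ ‖P₀ - P Tθ‖ := norm_nonneg _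
  have hsinθ : Real.sin θ ≤ ‖P₀ - P Tθ‖ := by
    rcases le_or_gt ‖P₀ - P Tθ‖ 1 with h | h
    · rw [← hangle, Real.sin_arcsin (by linarith) h]
    · have hpi : θ = π / 2 := by rw [← hangle, Real.arcsin_of_one_le h.le]
      rw [hpi, Real.sin_pi_div_two]
      linarith
  -- main claim
  have hmain : θ ≤ V * Tθ := by
    by_contra hcon
    push_neg at hcon
    set g : ℝ := θ - V * Tθ with hg
    have hg0 : 0 < g := by rw [hg]; linarith
    set κ : ℝ := V + g / (2 * (Tθ + 1)) with hκdef
    set δ : ℝ := g / 2 with hδdef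
    have hκV : V < κ := by
      rw [hκdef]
      have : 0 < g / (2 * (Tθ + 1)) := by positivity
      linarith
    have hδ0 : 0 < δ := by rw [hδdef]; positivity
    have hlt : κ * Tθ + δ < θ := by
      rw [hκdef, hδdef]
      have h1 : g / (2 * (Tθ + 1)) * Tθ < g / 2 := by
        rw [div_mul_eq_mul_div, div_lt_div_iff₀ (by positivity) (by norm_num)]
        nlinarith
      have h2 : (V + g / (2 * (Tθ + 1))) * Tθ = V * Tθ + g / (2 * (Tθ + 1)) * Tθ := by ring
      rw [h2]
      rw [hg] at h1 ⊢
      linarith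
    clear_value g κ δ
    have hπ2 : κ * Tθ + δ ≤ π / 2 := le_of_lt (lt_of_lt_of_le hlt hθπ)
    have hb := TimeLBAux.main_bound hH hP₀.1 hP₀.2 hT (by rw [hVeq, ← hV]; exact hκV) hδ0 hπ2
    rw [← hPT] at hb
    have hmono : Real.sin (κ * Tθ + δ) < Real.sin θ := by
      have hκ0 : 0 < κ := lt_of_le_of_lt hVnn hκV
      have hpos : 0 < κ * Tθ + δ := by positivity
      have hpi : (0:ℝ) < π := Real.pi_pos
      apply Real.strictMonoOn_sin ⟨by linarith, by linarith⟩ ⟨by linarith, by linarith⟩ hlt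
    linarith
  have hVpos : 0 < V := by
    rcases lt_or_ge 0 V with h | h
    · exact h
    · exfalso
      have : V * Tθ ≤ 0 := mul_nonpos_of_nonpos_of_nonneg h hT
      linarith
  refine ⟨hVpos, ?_⟩
  rw [ge_iff_le, div_le_iff₀ hVpos]
  linarith
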